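/- arXiv:2507.09828 — 2 statements merged into one kernel-verified Lean document; each statement's English description precedes it below -/
import Mathlib

section
/- For all c > 0, the Gaussian Q-function satisfies 1 - Φ(c) ≤ (1/c)·(1 - exp(-√(π/2)·c))·φ(c), where Φ and φ are the CDF and PDF of the standard normal distribution. -/
open Real MeasureTheory ProbabilityTheory Set

/-- Standard normal PDF. -/
noncomputable def stdPdf (c : ℝ) : ℝ := (Real.sqrt (2 * Real.pi))⁻¹ * Real.exp (-c ^ 2 / 2)

/-- Standard normal CDF. -/
noncomputable def stdCdf (c : ℝ) : ℝ := ∫ t in Set.Iic c, stdPdf t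

/-- τ(c) = c·Φ(c) + φ(c). -/
noncomputable def tau (c : ℝ) : ℝ := c * stdCdf c + stdPdf c

open Filter Topology

noncomputable def aQ : ℝ := Real.sqrt (Real.pi / 2)

lemma aQ_sq : aQ ^ 2 = Real.pi / 2 := Real.sq_sqrt (by positivity)

lemma aQ_pos : 0 < aQ := Real.sqrt_pos.2 (by positivity)

lemma aQ_lb : 1.25 ≤ aQ := by
  nlinarith [aQ_sq, aQ_pos, Real.pi_gt_d6]

lemma aQ_ub : aQ ≤ 1.26 := by
  nlinarith [aQ_sq, aQ_pos, Real.pi_lt_d2]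

lemma stdPdf_pos (c : ℝ) : 0 < stdPdf c := by
  unfold stdPdf
  positivity

lemma stdPdf_le (c : ℝ) : stdPdf c ≤ (Real.sqrt (2 * Real.pi))⁻¹ := by
  unfold stdPdf
  have h1 : Real.exp (-c ^ 2 / 2) ≤ 1 := by
    rw [Real.exp_le_one_iff]; nlinarith [sq_nonneg c]
  have h2 : (0:ℝ) < (Real.sqrt (2 * Real.pi))⁻¹ := by positivity
  nlinarith

lemma stdPdf_hasDerivAt (c : ℝ) : HasDerivAt stdPdf (-(c * stdPdf c)) c := by
  have h1 : HasDerivAt (fun x : ℝ => -x ^ 2 / 2) (-c) c := by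
    have := ((hasDerivAt_pow 2 c).neg).div_const 2
    refine this.congr_deriv ?_
    push_cast
    ring
  have h2 := (h1.exp).const_mul (Real.sqrt (2 * Real.pi))⁻¹
  have h3 : -(c * stdPdf c) = (Real.sqrt (2 * Real.pi))⁻¹ * (Real.exp (-c ^ 2 / 2) * -c) := by
    simp only [stdPdf]; ring
  rw [h3]
  exact h2

lemma stdPdf_eq : stdPdf = fun x => (Real.sqrt (2 * Real.pi))⁻¹ * Real.exp (-(1/2) * x ^ 2) := by
  funext x
  simp only [stdPdf]
  ring_nf

lemma stdPdf_continuous : Continuous stdPdf := by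
  have : ∀ c, HasDerivAt stdPdf (-(c * stdPdf c)) c := stdPdf_hasDerivAt
  exact continuous_iff_continuousAt.2 fun c => (this c).continuousAt

lemma stdPdf_integrable : Integrable stdPdf := by
  rw [stdPdf_eq]
  exact (integrable_exp_neg_mul_sq (by norm_num : (0:ℝ) < 1/2)).const_mul _

lemma stdPdf_integral : ∫ x, stdPdf x = 1 := by
  have h : ∫ x : ℝ, Real.exp (-(1/2) * x ^ 2) = Real.sqrt (Real.pi / (1/2)) :=
    integral_gaussian (1/2)
  have h2 : ∫ x, stdPdf x = (Real.sqrt (2 * Real.pi))⁻¹ * ∫ x : ℝ, Real.exp (-(1/2) * x ^ 2) := by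
    rw [stdPdf_eq]
    exact integral_const_mul _ _
  rw [h2, h]
  rw [show Real.pi / (1/2) = 2 * Real.pi by ring]
  rw [inv_mul_cancel₀]
  positivity

lemma stdCdf_add_Ioi (c : ℝ) : stdCdf c + ∫ t in Ioi c, stdPdf t = 1 := by
  rw [stdCdf, intervalIntegral.integral_Iic_add_Ioi stdPdf_integrable.integrableOn
    stdPdf_integrable.integrableOn, stdPdf_integral]

lemma stdCdf_zero : stdCdf 0 = 1/2 := by
  have heven : ∀ t : ℝ, stdPdf (-t) = stdPdf t := by
    intro t; unfold stdPdf; rw [neg_pow]; norm_num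
  have h1 : (∫ t in Iic (0:ℝ), stdPdf t) = ∫ t in Ioi (0:ℝ), stdPdf t := by
    calc (∫ t in Iic (0:ℝ), stdPdf t) = ∫ t in Iic (0:ℝ), stdPdf (-t) := by
          simp only [heven]
      _ = ∫ t in Ioi (-(0:ℝ)), stdPdf t := integral_comp_neg_Iic (0:ℝ) stdPdf
      _ = ∫ t in Ioi (0:ℝ), stdPdf t := by norm_num
  have h2 := stdCdf_add_Ioi 0
  rw [stdCdf] at *
  linarith [h1, h2]

lemma stdCdf_hasDerivAt (c : ℝ) : HasDerivAt stdCdf (stdPdf c) c := by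
  have hfun : stdCdf = fun x => stdCdf 0 + ∫ t in (0:ℝ)..x, stdPdf t := by
    funext x
    rw [← intervalIntegral.integral_Iic_sub_Iic stdPdf_integrable.integrableOn
      stdPdf_integrable.integrableOn]
    simp [stdCdf]
  rw [hfun]
  have h := intervalIntegral.integral_hasDerivAt_right (a := 0) (b := c)
    (stdPdf_integrable.intervalIntegrable)
    (stdPdf_continuous.stronglyMeasurableAtFilter _ _)
    (stdPdf_continuous.continuousAt (x := c))
  exact h.const_add (stdCdf 0)

lemma stdPdf_tendsto_zero : Tendsto stdPdf atTop (𝓝 0) := by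
  have h1 : Tendsto (fun c : ℝ => -c ^ 2 / 2) atTop atBot := by
    apply Tendsto.atBot_div_const (by norm_num : (0:ℝ) < 2)
    exact tendsto_neg_atBot_iff.2 (tendsto_pow_atTop (by norm_num))
  have h2 := Real.tendsto_exp_atBot.comp h1
  have h3 := h2.const_mul (Real.sqrt (2 * Real.pi))⁻¹
  rw [mul_zero] at h3
  exact h3

lemma negPdf_tendsto : Tendsto (fun c => -stdPdf c) atTop (𝓝 0) := by
  simpa using stdPdf_tendsto_zero.neg

lemma integral_Ioi_t_mul (c : ℝ) (hc : 0 ≤ c) :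
    ∫ t in Ioi c, t * stdPdf t = stdPdf c := by
  have hderiv : ∀ x ∈ Ici c, HasDerivAt (fun t => -stdPdf t) (x * stdPdf x) x := by
    intro x _
    have := (stdPdf_hasDerivAt x).neg
    simp only [neg_neg] at this
    exact this
  have hpos : ∀ x ∈ Ioi c, 0 ≤ x * stdPdf x := by
    intro x hx
    exact mul_nonneg (le_trans hc (le_of_lt hx)) (stdPdf_pos x).le
  have := integral_Ioi_of_hasDerivAt_of_nonneg' hderiv hpos negPdf_tendsto
  rw [this]; ring

lemma integrableOn_t_mul (c : ℝ) (hc : 0 ≤ c) :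
    IntegrableOn (fun t => t * stdPdf t) (Ioi c) := by
  have hderiv : ∀ x ∈ Ici c, HasDerivAt (fun t => -stdPdf t) (x * stdPdf x) x := by
    intro x _
    have := (stdPdf_hasDerivAt x).neg
    simp only [neg_neg] at this
    exact this
  have hpos : ∀ x ∈ Ioi c, 0 ≤ x * stdPdf x := by
    intro x hx
    exact mul_nonneg (le_trans hc (le_of_lt hx)) (stdPdf_pos x).le
  exact integrableOn_Ioi_deriv_of_nonneg' hderiv hpos negPdf_tendsto

lemma Q_eq (c : ℝ) : 1 - stdCdf c = ∫ t in Ioi c, stdPdf t := by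
  linarith [stdCdf_add_Ioi c]

lemma Q_nonneg (c : ℝ) : 0 ≤ 1 - stdCdf c := by
  rw [Q_eq]
  exact setIntegral_nonneg measurableSet_Ioi fun t _ => (stdPdf_pos t).le

lemma mul_Q_le (c : ℝ) (hc : 0 ≤ c) : c * (1 - stdCdf c) ≤ stdPdf c := by
  rw [Q_eq, ← integral_Ioi_t_mul c hc, ← integral_const_mul]
  apply setIntegral_mono_on
  · exact (stdPdf_integrable.integrableOn).const_mul c
  · exact integrableOn_t_mul c hc
  · exact measurableSet_Ioi
  · intro t ht
    exact mul_le_mul_of_nonneg_right (le_of_lt ht) (stdPdf_pos t).le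

lemma Q_tendsto : Tendsto (fun c => 1 - stdCdf c) atTop (𝓝 0) := by
  have hub : ∀ᶠ c in atTop, 1 - stdCdf c ≤ stdPdf c := by
    filter_upwards [eventually_ge_atTop (1:ℝ)] with c hc
    have h := mul_Q_le c (by linarith)
    nlinarith [Q_nonneg c]
  have hlb : ∀ᶠ c in atTop, 0 ≤ 1 - stdCdf c := Eventually.of_forall Q_nonneg
  exact tendsto_of_tendsto_of_tendsto_of_le_of_le' tendsto_const_nhds stdPdf_tendsto_zero hlb hub

lemma cQ_tendsto : Tendsto (fun c => c * (1 - stdCdf c)) atTop (𝓝 0) := by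
  have hub : ∀ᶠ c in atTop, c * (1 - stdCdf c) ≤ stdPdf c := by
    filter_upwards [eventually_ge_atTop (0:ℝ)] with c hc
    exact mul_Q_le c hc
  have hlb : ∀ᶠ c in atTop, 0 ≤ c * (1 - stdCdf c) := by
    filter_upwards [eventually_ge_atTop (0:ℝ)] with c hc
    exact mul_nonneg hc (Q_nonneg c)
  exact tendsto_of_tendsto_of_tendsto_of_le_of_le' tendsto_const_nhds stdPdf_tendsto_zero hlb hub

lemma exp_neg_aQ_tendsto : Tendsto (fun c : ℝ => Real.exp (-aQ * c)) atTop (𝓝 0) := by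
  apply Real.tendsto_exp_atBot.comp
  exact Tendsto.const_mul_atTop_of_neg (neg_neg_iff_pos.2 aQ_pos) tendsto_id

lemma mul_exp_neg_aQ_tendsto :
    Tendsto (fun c : ℝ => (aQ + c) * Real.exp (-aQ * c)) atTop (𝓝 0) := by
  have hupper : Tendsto (fun c : ℝ => aQ * Real.exp (-c) + c * Real.exp (-c)) atTop (𝓝 0) := by
    have h1 : Tendsto (fun c : ℝ => aQ * Real.exp (-c)) atTop (𝓝 (aQ * 0)) :=
      Real.tendsto_exp_neg_atTop_nhds_zero.const_mul aQ
    have h2 : Tendsto (fun c : ℝ => c * Real.exp (-c)) atTop (𝓝 0) := by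
      have := Real.tendsto_pow_mul_exp_neg_atTop_nhds_zero 1
      simpa using this
    rw [mul_zero] at h1
    simpa using h1.add h2
  apply tendsto_of_tendsto_of_tendsto_of_le_of_le' tendsto_const_nhds hupper
  · filter_upwards [eventually_ge_atTop (0:ℝ)] with c hc
    exact mul_nonneg (by linarith [aQ_pos]) (Real.exp_pos _).le
  · filter_upwards [eventually_ge_atTop (0:ℝ)] with c hc
    have h1 : Real.exp (-aQ * c) ≤ Real.exp (-c) := by
      apply Real.exp_le_exp.2
      nlinarith [aQ_lb]
    have h2 : (0:ℝ) ≤ aQ + c := by linarith [aQ_pos]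
    calc (aQ + c) * Real.exp (-aQ * c) ≤ (aQ + c) * Real.exp (-c) :=
          mul_le_mul_of_nonneg_left h1 h2
      _ = aQ * Real.exp (-c) + c * Real.exp (-c) := by ring

noncomputable def hFun (c : ℝ) : ℝ :=
  (aQ + c) * Real.exp (-aQ * c) * stdPdf c - (1 - stdCdf c)

noncomputable def GFun (c : ℝ) : ℝ :=
  (1 - Real.exp (-aQ * c)) * stdPdf c - c * (1 - stdCdf c)

noncomputable def qFun (c : ℝ) : ℝ := Real.exp (aQ * c) + 1 - (aQ + c) ^ 2

noncomputable def qFun' (c : ℝ) : ℝ := aQ * Real.exp (aQ * c) - 2 * (aQ + c)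

lemma expNeg_hasDerivAt (c : ℝ) :
    HasDerivAt (fun x : ℝ => Real.exp (-aQ * x)) (-aQ * Real.exp (-aQ * c)) c := by
  have h1 : HasDerivAt (fun x : ℝ => -aQ * x) (-aQ) c := by
    simpa using (hasDerivAt_id c).const_mul (-aQ)
  simpa [mul_comm] using h1.exp

lemma GFun_hasDerivAt (c : ℝ) : HasDerivAt GFun (hFun c) c := by
  have h1 : HasDerivAt (fun x : ℝ => (1 - Real.exp (-aQ * x)) * stdPdf x)
      ((aQ * Real.exp (-aQ * c)) * stdPdf c + (1 - Real.exp (-aQ * c)) * (-(c * stdPdf c))) c := by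
    have ha : HasDerivAt (fun x : ℝ => 1 - Real.exp (-aQ * x)) (aQ * Real.exp (-aQ * c)) c := by
      simpa using (expNeg_hasDerivAt c).const_sub 1
    exact ha.mul (stdPdf_hasDerivAt c)
  have h2 : HasDerivAt (fun x : ℝ => x * (1 - stdCdf x))
      (1 * (1 - stdCdf c) + c * (-stdPdf c)) c := by
    have hb : HasDerivAt (fun x : ℝ => 1 - stdCdf x) (-stdPdf c) c := by
      simpa using (stdCdf_hasDerivAt c).const_sub 1
    exact (hasDerivAt_id c).mul hb
  have h3 := h1.sub h2
  have heq : (aQ * Real.exp (-aQ * c)) * stdPdf c + (1 - Real.exp (-aQ * c)) * (-(c * stdPdf c))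
      - (1 * (1 - stdCdf c) + c * (-stdPdf c)) = hFun c := by
    simp only [hFun]; ring
  rw [heq] at h3
  exact h3

lemma hFun_hasDerivAt (c : ℝ) :
    HasDerivAt hFun (stdPdf c * (Real.exp (-aQ * c) * qFun c)) c := by
  have h1 : HasDerivAt (fun x : ℝ => (aQ + x) * Real.exp (-aQ * x) * stdPdf x)
      (((1 * Real.exp (-aQ * c) + (aQ + c) * (-aQ * Real.exp (-aQ * c)))) * stdPdf c
        + (aQ + c) * Real.exp (-aQ * c) * (-(c * stdPdf c))) c := by
    have ha : HasDerivAt (fun x : ℝ => (aQ + x)) 1 c := by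
      simpa using (hasDerivAt_id c).const_add aQ
    exact ((ha.mul (expNeg_hasDerivAt c)).mul (stdPdf_hasDerivAt c))
  have h2 : HasDerivAt (fun x : ℝ => 1 - stdCdf x) (-stdPdf c) c := by
    simpa using (stdCdf_hasDerivAt c).const_sub 1
  have h3 := h1.sub h2
  have heq : ((1 * Real.exp (-aQ * c) + (aQ + c) * (-aQ * Real.exp (-aQ * c)))) * stdPdf c
      + (aQ + c) * Real.exp (-aQ * c) * (-(c * stdPdf c)) - (-stdPdf c)
      = stdPdf c * (Real.exp (-aQ * c) * qFun c) := by
    simp only [qFun]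
    have hexp : Real.exp (-aQ * c) * Real.exp (aQ * c) = 1 := by
      rw [← Real.exp_add]; simp
    linear_combination (-stdPdf c) * hexp
  rw [heq] at h3
  exact h3

lemma aQ_mul_inv_sqrt : aQ * (Real.sqrt (2 * Real.pi))⁻¹ = 1 / 2 := by
  have h1 : aQ * Real.sqrt (2 * Real.pi) = Real.pi := by
    rw [show aQ = Real.sqrt (Real.pi / 2) from rfl, ← Real.sqrt_mul (by positivity)]
    rw [show Real.pi / 2 * (2 * Real.pi) = Real.pi ^ 2 by ring]
    exact Real.sqrt_sq Real.pi_pos.le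
  have h2 : (0:ℝ) < Real.sqrt (2 * Real.pi) := by positivity
  have hS2 : Real.sqrt (2 * Real.pi) ^ 2 = 2 * Real.pi :=
    Real.sq_sqrt (by positivity)
  have h4 : aQ * (2 * Real.pi) = Real.pi * Real.sqrt (2 * Real.pi) := by
    linear_combination Real.sqrt (2 * Real.pi) * h1 - aQ * hS2
  have h5 : Real.pi * (2 * aQ - Real.sqrt (2 * Real.pi)) = 0 := by linear_combination h4
  rcases mul_eq_zero.1 h5 with h | h
  · exact absurd h Real.pi_pos.ne'
  · rw [inv_eq_one_div, mul_one_div, div_eq_iff h2.ne']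
    linarith

lemma hFun_zero : hFun 0 = 0 := by
  have h0 : hFun 0 = aQ * (Real.sqrt (2 * Real.pi))⁻¹ - 1 / 2 := by
    unfold hFun stdPdf
    rw [stdCdf_zero]
    norm_num
  rw [h0, aQ_mul_inv_sqrt]
  ring

lemma GFun_zero : GFun 0 = 0 := by
  simp [GFun]

lemma hFun_tendsto : Tendsto hFun atTop (𝓝 0) := by
  have h1 : Tendsto (fun c => (aQ + c) * Real.exp (-aQ * c) * stdPdf c) atTop (𝓝 (0 * 0)) :=
    mul_exp_neg_aQ_tendsto.mul stdPdf_tendsto_zero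
  rw [mul_zero] at h1
  have := h1.sub Q_tendsto
  have heq : hFun = fun c => (aQ + c) * Real.exp (-aQ * c) * stdPdf c - (1 - stdCdf c) := rfl
  rw [heq]
  simpa using this

lemma GFun_tendsto : Tendsto GFun atTop (𝓝 0) := by
  have h1 : Tendsto (fun c : ℝ => (1 - Real.exp (-aQ * c)) * stdPdf c) atTop (𝓝 ((1 - 0) * 0)) := by
    exact ((tendsto_const_nhds).sub exp_neg_aQ_tendsto).mul stdPdf_tendsto_zero
  rw [show ((1:ℝ) - 0) * 0 = 0 by ring] at h1
  have := h1.sub cQ_tendsto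
  have heq : GFun = fun c => (1 - Real.exp (-aQ * c)) * stdPdf c - c * (1 - stdCdf c) := rfl
  rw [heq]
  simpa using this

lemma qFun_hasDerivAt (c : ℝ) : HasDerivAt qFun (qFun' c) c := by
  have h1 : HasDerivAt (fun x : ℝ => Real.exp (aQ * x)) (aQ * Real.exp (aQ * c)) c := by
    have := ((hasDerivAt_id c).const_mul aQ).exp
    simpa [mul_comm] using this
  have h2 : HasDerivAt (fun x : ℝ => (aQ + x) ^ 2) (2 * (aQ + c)) c := by
    have ha : HasDerivAt (fun x : ℝ => (aQ + x)) 1 c := by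
      simpa using (hasDerivAt_id c).const_add aQ
    have := ha.pow 2
    simp at this
    exact this
  have h3 := (h1.add_const 1).sub h2
  exact h3

lemma qFun'_hasDerivAt (c : ℝ) :
    HasDerivAt qFun' (aQ ^ 2 * Real.exp (aQ * c) - 2) c := by
  have h1 : HasDerivAt (fun x : ℝ => Real.exp (aQ * x)) (aQ * Real.exp (aQ * c)) c := by
    have := ((hasDerivAt_id c).const_mul aQ).exp
    simpa [mul_comm] using this
  have h2 := h1.const_mul aQ
  have h3 : HasDerivAt (fun x : ℝ => 2 * (aQ + x)) 2 c := by
    simpa using ((hasDerivAt_id c).const_add aQ).const_mul 2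
  have h4 := h2.sub h3
  have heq : aQ * (aQ * Real.exp (aQ * c)) - 2 = aQ ^ 2 * Real.exp (aQ * c) - 2 := by ring
  rw [heq] at h4
  exact h4

noncomputable def dQ : ℝ := Real.log (4 / Real.pi) / aQ

lemma dQ_nonneg : 0 ≤ dQ := by
  apply div_nonneg _ aQ_pos.le
  apply Real.log_nonneg
  rw [le_div_iff₀ Real.pi_pos]
  nlinarith [Real.pi_lt_d2]

lemma aQ_mul_dQ : aQ * dQ = Real.log (4 / Real.pi) := by
  rw [dQ, mul_div_cancel₀ _ aQ_pos.ne']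

lemma dQ_le_two : dQ ≤ 2 := by
  rw [dQ, div_le_iff₀ aQ_pos]
  have h1 : Real.log (4 / Real.pi) ≤ 4 / Real.pi - 1 :=
    Real.log_le_sub_one_of_pos (by positivity)
  have h2 : 4 / Real.pi ≤ 4 / 3 := by
    apply div_le_div_of_nonneg_left (by norm_num) (by norm_num)
    nlinarith [Real.pi_gt_d6]
  nlinarith [aQ_lb]

lemma qFun''_nonpos {x : ℝ} (hx : x ∈ Icc 0 dQ) : aQ ^ 2 * Real.exp (aQ * x) - 2 ≤ 0 := by
  have h1 : aQ * x ≤ aQ * dQ := mul_le_mul_of_nonneg_left hx.2 aQ_pos.le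
  have h2 : Real.exp (aQ * x) ≤ 4 / Real.pi := by
    rw [← Real.exp_log (show (0:ℝ) < 4 / Real.pi by positivity), ← aQ_mul_dQ] at *
    exact Real.exp_le_exp.2 h1
  rw [aQ_sq]
  have hπ := Real.pi_pos
  have h3 := (le_div_iff₀ hπ).1 h2
  linarith

lemma qFun''_pos {x : ℝ} (hx : dQ < x) : 0 < aQ ^ 2 * Real.exp (aQ * x) - 2 := by
  have h1 : aQ * dQ < aQ * x := mul_lt_mul_of_pos_left hx aQ_pos
  have h2 : 4 / Real.pi < Real.exp (aQ * x) := by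
    rw [← Real.exp_log (show (0:ℝ) < 4 / Real.pi by positivity), ← aQ_mul_dQ]
    exact Real.exp_lt_exp.2 h1
  rw [aQ_sq]
  have hπ := Real.pi_pos
  have h3 := (div_lt_iff₀ hπ).1 h2
  linarith

lemma qFun'_cont : Continuous qFun' :=
  continuous_iff_continuousAt.2 fun c => (qFun'_hasDerivAt c).continuousAt

lemma qFun_cont : Continuous qFun :=
  continuous_iff_continuousAt.2 fun c => (qFun_hasDerivAt c).continuousAt

lemma qFun'_anti : AntitoneOn qFun' (Icc 0 dQ) := by
  apply antitoneOn_of_deriv_nonpos (convex_Icc 0 dQ) qFun'_cont.continuousOn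
  · intro x _
    exact (qFun'_hasDerivAt x).differentiableAt.differentiableWithinAt
  · intro x hx
    rw [interior_Icc] at hx
    rw [(qFun'_hasDerivAt x).deriv]
    exact qFun''_nonpos ⟨hx.1.le, hx.2.le⟩

lemma qFun'_mono : StrictMonoOn qFun' (Ici dQ) := by
  apply strictMonoOn_of_deriv_pos (convex_Ici dQ) qFun'_cont.continuousOn
  intro x hx
  rw [interior_Ici] at hx
  rw [(qFun'_hasDerivAt x).deriv]
  exact qFun''_pos hx

lemma qFun'_zero : qFun' 0 = -aQ := by
  simp [qFun']
  ring

lemma exp_one_lb : (2.718 : ℝ) ≤ Real.exp 1 := by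
  have := Real.exp_one_gt_d9
  linarith

lemma qFun'_two_pos : 0 < qFun' 2 := by
  have h1 : Real.exp (aQ * 2) ≥ Real.exp 2 := by
    apply Real.exp_le_exp.2
    nlinarith [aQ_lb]
  have h2 : Real.exp 2 = Real.exp 1 * Real.exp 1 := by
    rw [← Real.exp_add]; norm_num
  have h3 := exp_one_lb
  have h4 : (7.38 : ℝ) ≤ Real.exp 2 := by nlinarith
  rw [qFun']
  nlinarith [aQ_lb, aQ_ub]

lemma qFun'_d_neg : qFun' dQ < 0 := by
  have h := qFun'_anti ⟨le_refl 0, dQ_nonneg⟩ ⟨dQ_nonneg, le_refl dQ⟩ dQ_nonneg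
  rw [qFun'_zero] at h
  linarith [aQ_pos]

lemma exists_rQ : ∃ r ∈ Icc dQ 2, qFun' r = 0 := by
  have h := intermediate_value_Icc dQ_le_two qFun'_cont.continuousOn
    (show (0:ℝ) ∈ Icc (qFun' dQ) (qFun' 2) from ⟨qFun'_d_neg.le, qFun'_two_pos.le⟩)
  obtain ⟨r, hr, hr0⟩ := h
  exact ⟨r, hr, hr0⟩

lemma qFun_anti {r : ℝ} (hr : r ∈ Icc dQ 2) (hr0 : qFun' r = 0) :
    AntitoneOn qFun (Icc 0 r) := by
  apply antitoneOn_of_deriv_nonpos (convex_Icc 0 r) qFun_cont.continuousOn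
  · intro x _
    exact (qFun_hasDerivAt x).differentiableAt.differentiableWithinAt
  · intro x hx
    rw [interior_Icc] at hx
    rw [(qFun_hasDerivAt x).deriv]
    rcases le_total x dQ with hxd | hxd
    · have h := qFun'_anti ⟨le_refl 0, dQ_nonneg⟩ ⟨hx.1.le, hxd⟩ hx.1.le
      rw [qFun'_zero] at h
      linarith [aQ_pos]
    · have h := qFun'_mono.monotoneOn (Set.mem_Ici.2 hxd) (Set.mem_Ici.2 hr.1) hx.2.le
      linarith [hr0]

lemma qFun_mono {r : ℝ} (hr : r ∈ Icc dQ 2) (hr0 : qFun' r = 0) :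
    StrictMonoOn qFun (Ici r) := by
  apply strictMonoOn_of_deriv_pos (convex_Ici r) qFun_cont.continuousOn
  intro x hx
  rw [interior_Ici] at hx
  rw [(qFun_hasDerivAt x).deriv]
  have h2 := qFun'_mono (Set.mem_Ici.2 hr.1) (Set.mem_Ici.2 (hr.1.trans hx.le)) hx
  rw [hr0] at h2
  exact h2

lemma qFun_zero_pos : 0 < qFun 0 := by
  have : qFun 0 = 2 - aQ ^ 2 := by
    simp [qFun]
    ring
  rw [this, aQ_sq]
  nlinarith [Real.pi_lt_d2]

lemma qFun_three_pos : 0 < qFun 3 := by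
  rw [qFun]
  have h1 : Real.exp 3 ≤ Real.exp (aQ * 3) := by
    apply Real.exp_le_exp.2
    nlinarith [aQ_lb]
  have h2 : Real.exp 3 = Real.exp 1 * Real.exp 1 * Real.exp 1 := by
    rw [← Real.exp_add, ← Real.exp_add]; norm_num
  have h3 := exp_one_lb
  have h4 : (20.0 : ℝ) ≤ Real.exp 3 := by nlinarith [Real.exp_pos 1]
  nlinarith [aQ_lb, aQ_ub]

lemma hFun_cont : Continuous hFun :=
  continuous_iff_continuousAt.2 fun c => (hFun_hasDerivAt c).continuousAt

lemma GFun_cont : Continuous GFun :=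
  continuous_iff_continuousAt.2 fun c => (GFun_hasDerivAt c).continuousAt

lemma hFun_monoOn {s : Set ℝ} (hconv : Convex ℝ s)
    (hq : ∀ x ∈ interior s, 0 ≤ qFun x) : MonotoneOn hFun s := by
  apply monotoneOn_of_deriv_nonneg hconv hFun_cont.continuousOn
  · intro x _
    exact (hFun_hasDerivAt x).differentiableAt.differentiableWithinAt
  · intro x hx
    rw [(hFun_hasDerivAt x).deriv]
    have := hq x hx
    exact mul_nonneg (stdPdf_pos x).le (mul_nonneg (Real.exp_pos _).le this)
    
lemma hFun_antiOn {s : Set ℝ} (hconv : Convex ℝ s)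
    (hq : ∀ x ∈ interior s, qFun x ≤ 0) : AntitoneOn hFun s := by
  apply antitoneOn_of_deriv_nonpos hconv hFun_cont.continuousOn
  · intro x _
    exact (hFun_hasDerivAt x).differentiableAt.differentiableWithinAt
  · intro x hx
    rw [(hFun_hasDerivAt x).deriv]
    have h := hq x hx
    have h1 := stdPdf_pos x
    have h2 := Real.exp_pos (-aQ * x)
    nlinarith [mul_nonneg h1.le (mul_nonneg h2.le (neg_nonneg.2 h))]

lemma GFun_monoOn {s : Set ℝ} (hconv : Convex ℝ s)
    (hq : ∀ x ∈ interior s, 0 ≤ hFun x) : MonotoneOn GFun s := by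
  apply monotoneOn_of_deriv_nonneg hconv GFun_cont.continuousOn
  · intro x _
    exact (GFun_hasDerivAt x).differentiableAt.differentiableWithinAt
  · intro x hx
    rw [(GFun_hasDerivAt x).deriv]
    exact hq x hx

lemma GFun_antiOn {s : Set ℝ} (hconv : Convex ℝ s)
    (hq : ∀ x ∈ interior s, hFun x ≤ 0) : AntitoneOn GFun s := by
  apply antitoneOn_of_deriv_nonpos hconv GFun_cont.continuousOn
  · intro x _
    exact (GFun_hasDerivAt x).differentiableAt.differentiableWithinAt
  · intro x hx
    rw [(GFun_hasDerivAt x).deriv]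
    exact hq x hx

lemma G_nonneg_front {c : ℝ} (hc : 0 ≤ c)
    (hpos : ∀ x, 0 < x → x < c → 0 ≤ hFun x) : 0 ≤ GFun c := by
  have hm : MonotoneOn GFun (Icc 0 c) := by
    apply GFun_monoOn (convex_Icc 0 c)
    intro x hx
    rw [interior_Icc] at hx
    exact hpos x hx.1 hx.2
  have := hm ⟨le_refl 0, hc⟩ ⟨hc, le_refl c⟩ hc
  rw [GFun_zero] at this
  exact this

lemma G_nonneg_tail {c : ℝ} (hneg : ∀ x, c ≤ x → hFun x ≤ 0) : 0 ≤ GFun c := by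
  have hm : AntitoneOn GFun (Ici c) := by
    apply GFun_antiOn (convex_Ici c)
    intro x hx
    rw [interior_Ici] at hx
    exact hneg x hx.le
  apply le_of_tendsto GFun_tendsto
  filter_upwards [eventually_ge_atTop c] with t ht
  exact hm (self_mem_Ici) ht ht

lemma hFun_nonneg_left {s₁ : ℝ} (hs₁ : 0 ≤ s₁)
    (hq1 : ∀ x ∈ Icc 0 s₁, 0 ≤ qFun x) :
    ∀ x ∈ Icc 0 s₁, 0 ≤ hFun x := by
  have hm : MonotoneOn hFun (Icc 0 s₁) := by
    apply hFun_monoOn (convex_Icc 0 s₁)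
    intro x hx
    rw [interior_Icc] at hx
    exact hq1 x ⟨hx.1.le, hx.2.le⟩
  intro x hx
  have := hm ⟨le_refl 0, hs₁⟩ hx hx.1
  rw [hFun_zero] at this
  exact this

lemma hFun_nonpos_tail {s₂ : ℝ}
    (hq3 : ∀ x, s₂ ≤ x → 0 ≤ qFun x) :
    ∀ x, s₂ ≤ x → hFun x ≤ 0 := by
  have hm : MonotoneOn hFun (Ici s₂) := by
    apply hFun_monoOn (convex_Ici s₂)
    intro x hx
    rw [interior_Ici] at hx
    exact hq3 x hx.le
  intro x hx
  apply ge_of_tendsto hFun_tendsto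
  filter_upwards [eventually_ge_atTop x] with t ht
  exact hm (Set.mem_Ici.2 hx) (Set.mem_Ici.2 (hx.trans ht)) ht

lemma G_nonneg {c : ℝ} (hc : 0 ≤ c) : 0 ≤ GFun c := by
  obtain ⟨r, hr, hr0⟩ := exists_rQ
  have h0r : (0:ℝ) ≤ r := dQ_nonneg.trans hr.1
  by_cases hqall : ∀ x, 0 ≤ x → 0 ≤ qFun x
  · apply G_nonneg_front hc
    intro x hx _
    exact hFun_nonneg_left hx.le (fun y hy => hqall y hy.1) x ⟨hx.le, le_refl x⟩
  · push_neg at hqall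
    obtain ⟨z, hz0, hzneg⟩ := hqall
    have hqmono := qFun_mono hr hr0
    have hqanti := qFun_anti hr hr0
    have hz3 : z < 3 := by
      by_contra hz3
      push_neg at hz3
      have h1 : qFun 3 ≤ qFun z := by
        rcases eq_or_lt_of_le hz3 with h | h
        · rw [h]
        · exact (hqmono (Set.mem_Ici.2 (hr.2.trans (by norm_num)))
            (Set.mem_Ici.2 (hr.2.trans (by norm_num : (2:ℝ) ≤ 3) |>.trans hz3)) h).le
      linarith [qFun_three_pos]
    have hqr : qFun r < 0 := by
      rcases le_total z r with hzr | hzr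
      · have := hqanti ⟨hz0, hzr⟩ ⟨h0r, le_refl r⟩ hzr
        linarith
      · rcases eq_or_lt_of_le hzr with h | h
        · rw [h]; exact hzneg
        · have := hqmono (Set.mem_Ici.2 (le_refl r)) (Set.mem_Ici.2 hzr) h
          linarith
    -- first zero s₁ of q in [0, r]
    obtain ⟨s₁, hs₁mem, hs₁0⟩ := intermediate_value_Icc' h0r qFun_cont.continuousOn
      (show (0:ℝ) ∈ Icc (qFun r) (qFun 0) from ⟨hqr.le, qFun_zero_pos.le⟩)
    -- second zero s₂ of q in [r, 3]
    obtain ⟨s₂, hs₂mem, hs₂0⟩ := intermediate_value_Icc (hr.2.trans (by norm_num : (2:ℝ) ≤ 3))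
      qFun_cont.continuousOn
      (show (0:ℝ) ∈ Icc (qFun r) (qFun 3) from ⟨hqr.le, qFun_three_pos.le⟩)
    have hq1 : ∀ x ∈ Icc 0 s₁, 0 ≤ qFun x := by
      intro x hx
      have := hqanti ⟨hx.1, hx.2.trans hs₁mem.2⟩ ⟨hs₁mem.1, hs₁mem.2⟩ hx.2
      rw [hs₁0] at this
      exact this
    have hq2 : ∀ x ∈ Icc s₁ s₂, qFun x ≤ 0 := by
      intro x hx
      rcases le_total x r with hxr | hxr
      · have := hqanti ⟨hs₁mem.1, hs₁mem.2⟩ ⟨hs₁mem.1.trans hx.1, hxr⟩ hx.1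
        rw [hs₁0] at this
        exact this
      · rcases eq_or_lt_of_le hx.2 with h | h
        · rw [h, hs₂0]
        · have := hqmono (Set.mem_Ici.2 hxr) (Set.mem_Ici.2 (hxr.trans (hx.2.trans (le_refl s₂)))) h
          rw [hs₂0] at this
          exact this.le
    have hq3 : ∀ x, s₂ ≤ x → 0 ≤ qFun x := by
      intro x hx
      rcases eq_or_lt_of_le hx with h | h
      · rw [← h, hs₂0]
      · have := hqmono (Set.mem_Ici.2 hs₂mem.1) (Set.mem_Ici.2 (hs₂mem.1.trans hx)) h
        rw [hs₂0] at this
        exact this.le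
    have hhleft : ∀ x ∈ Icc 0 s₁, 0 ≤ hFun x := hFun_nonneg_left hs₁mem.1 hq1
    have hhanti : AntitoneOn hFun (Icc s₁ s₂) := by
      apply hFun_antiOn (convex_Icc s₁ s₂)
      intro x hx
      rw [interior_Icc] at hx
      exact hq2 x ⟨hx.1.le, hx.2.le⟩
    have hhtail : ∀ x, s₂ ≤ x → hFun x ≤ 0 := hFun_nonpos_tail hq3
    have hs12 : s₁ ≤ s₂ := hs₁mem.2.trans hs₂mem.1
    rcases le_or_gt c s₁ with h1 | h1
    · apply G_nonneg_front hc
      intro x hx hxc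
      exact hhleft x ⟨hx.le, hxc.le.trans h1⟩
    · rcases le_or_gt c s₂ with h2 | h2
      · by_cases hc0 : 0 ≤ hFun c
        · apply G_nonneg_front hc
          intro x hx hxc
          rcases le_total x s₁ with hxs | hxs
          · exact hhleft x ⟨hx.le, hxs⟩
          · have := hhanti ⟨hxs, hxc.le.trans h2⟩ ⟨h1.le, h2⟩ hxc.le
            linarith
        · push_neg at hc0
          apply G_nonneg_tail
          intro x hx
          rcases le_total x s₂ with hxs | hxs
          · have := hhanti ⟨h1.le, h2⟩ ⟨h1.le.trans hx, hxs⟩ hx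
            linarith
          · exact hhtail x hxs
      · apply G_nonneg_tail
        intro x hx
        exact hhtail x (h2.le.trans hx)

theorem q_function_upper_bound (c : ℝ) (hc : 0 < c) :
    1 - stdCdf c ≤ (1 / c) * (1 - Real.exp (-Real.sqrt (Real.pi / 2) * c)) * stdPdf c := by
  have hG := G_nonneg hc.le
  have haQ : Real.sqrt (Real.pi / 2) = aQ := rfl
  rw [haQ]
  have hGdef : GFun c = (1 - Real.exp (-aQ * c)) * stdPdf c - c * (1 - stdCdf c) := rfl
  rw [hGdef] at hG
  rw [show (1 / c) * (1 - Real.exp (-aQ * c)) * stdPdf c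
      = ((1 - Real.exp (-aQ * c)) * stdPdf c) / c by ring, le_div_iff₀ hc]
  linarith
end

section
/- Define τ(c) = c·Φ(c) + φ(c). For every β > 0, τ(-√β) ≥ exp(-√(π/2)·√β)·φ(√β). -/
open Real MeasureTheory ProbabilityTheory Set

open Filter

lemma gauss_cont : Continuous fun u : ℝ => Real.exp (-u ^ 2 / 2) := by
  fun_prop

lemma gauss_integrable : Integrable fun u : ℝ => Real.exp (-u ^ 2 / 2) := by
  have h := integrable_exp_neg_mul_sq (b := (1/2:ℝ)) (by norm_num)
  have e : (fun u : ℝ => Real.exp (-u ^ 2 / 2)) = fun u : ℝ => Real.exp (-(1/2:ℝ) * u ^ 2) := by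
    funext u; congr 1; ring
  rw [e]; exact h

/-- Primitive of the gaussian from 0. -/
noncomputable def Gfun (s : ℝ) : ℝ := ∫ u in (0:ℝ)..s, Real.exp (-u ^ 2 / 2)

lemma Gfun_hasDerivAt (s : ℝ) : HasDerivAt Gfun (Real.exp (-s ^ 2 / 2)) s :=
  intervalIntegral.integral_hasDerivAt_right
    (gauss_cont.intervalIntegrable _ _)
    (gauss_cont.stronglyMeasurableAtFilter _ _)
    gauss_cont.continuousAt

lemma Gfun_zero : Gfun 0 = 0 := intervalIntegral.integral_same

lemma Gfun_nonneg {s : ℝ} (hs : 0 ≤ s) : 0 ≤ Gfun s :=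
  intervalIntegral.integral_nonneg hs (fun u _ => (Real.exp_pos _).le)

lemma Gfun_le_self {s : ℝ} (hs : 0 ≤ s) : Gfun s ≤ s := by
  have h : Gfun s ≤ ∫ _ in (0:ℝ)..s, (1:ℝ) := by
    apply intervalIntegral.integral_mono_on hs
      (gauss_cont.intervalIntegrable _ _) intervalIntegrable_const
    intro u _
    rw [Real.exp_le_one_iff]
    nlinarith [sq_nonneg u]
  simpa using h

lemma gauss_Ioi : ∫ u in Set.Ioi (0:ℝ), Real.exp (-u ^ 2 / 2) = Real.sqrt (Real.pi / 2) := by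
  have h := integral_gaussian_Ioi (1/2)
  have e : ∀ u : ℝ, -(1/2 : ℝ) * u ^ 2 = -u ^ 2 / 2 := fun u => by ring
  simp_rw [e] at h
  rw [h, show Real.pi / (1/2 : ℝ) = 2 ^ 2 * (Real.pi / 2) by ring,
    Real.sqrt_mul (by positivity), Real.sqrt_sq (by norm_num)]
  ring

lemma Gfun_le_a {s : ℝ} (hs : 0 ≤ s) : Gfun s ≤ Real.sqrt (Real.pi / 2) := by
  rw [← gauss_Ioi, Gfun, intervalIntegral.integral_of_le hs]
  exact setIntegral_mono_set gauss_integrable.integrableOn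
    (Filter.Eventually.of_forall fun u => (Real.exp_pos _).le)
    (HasSubset.Subset.eventuallyLE Ioc_subset_Ioi_self)

lemma int1 {c : ℝ} (hc : 0 < c) :
    IntegrableOn (fun s => Real.exp (-(c * s) - s ^ 2 / 2)) (Set.Ioi 0) := by
  apply Integrable.mono' gauss_integrable.integrableOn
    (by fun_prop : Continuous fun s : ℝ => Real.exp (-(c * s) - s ^ 2 / 2)).aestronglyMeasurable
  rw [ae_restrict_iff' measurableSet_Ioi]
  refine Filter.Eventually.of_forall fun s hs => ?_
  rw [Real.norm_eq_abs, abs_of_pos (Real.exp_pos _)]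
  apply Real.exp_le_exp.2
  nlinarith [mul_pos hc (mem_Ioi.1 hs)]

lemma int2 {c : ℝ} (hc : 0 < c) :
    IntegrableOn (fun s => Real.exp (-(c * s)) * Gfun s) (Set.Ioi 0) := by
  have hGc : Continuous Gfun :=
    continuous_iff_continuousAt.2 fun s => (Gfun_hasDerivAt s).continuousAt
  have hI : IntegrableOn (fun s : ℝ => Real.sqrt (Real.pi / 2) * Real.exp (-(c * s))) (Set.Ioi 0) := by
    have := (exp_neg_integrableOn_Ioi 0 hc).const_mul (Real.sqrt (Real.pi / 2))
    simpa [neg_mul, IntegrableOn] using this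
  apply Integrable.mono' hI
    (by fun_prop : Continuous fun s : ℝ => Real.exp (-(c * s)) * Gfun s).aestronglyMeasurable
  rw [ae_restrict_iff' measurableSet_Ioi]
  refine Filter.Eventually.of_forall fun s hs => ?_
  have hs0 : (0:ℝ) ≤ s := (mem_Ioi.1 hs).le
  rw [Real.norm_eq_abs, abs_of_nonneg (mul_nonneg (Real.exp_pos _).le (Gfun_nonneg hs0))]
  rw [mul_comm (Real.sqrt (Real.pi / 2))]
  exact mul_le_mul_of_nonneg_left (Gfun_le_a hs0) (Real.exp_pos _).le

lemma tendsto_exp_mul {c : ℝ} (hc : 0 < c) :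
    Tendsto (fun s : ℝ => Real.exp (-(c * s))) atTop (nhds 0) :=
  Real.tendsto_exp_neg_atTop_nhds_zero.comp (Tendsto.const_mul_atTop hc tendsto_id)

/-- Integration by parts identity. -/
lemma key_id {c : ℝ} (hc : 0 < c) :
    ∫ s in Set.Ioi (0:ℝ), Real.exp (-(c * s) - s ^ 2 / 2)
      = c * ∫ s in Set.Ioi (0:ℝ), Real.exp (-(c * s)) * Gfun s := by
  set F : ℝ → ℝ := fun s => Real.exp (-(c * s)) * Gfun s with hF
  set F' : ℝ → ℝ := fun s =>
    Real.exp (-(c * s) - s ^ 2 / 2) - c * (Real.exp (-(c * s)) * Gfun s) with hF'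
  have hderiv : ∀ s ∈ Set.Ici (0:ℝ), HasDerivAt F (F' s) s := by
    intro s _
    have h1 : HasDerivAt (fun s : ℝ => Real.exp (-(c * s))) (-c * Real.exp (-(c * s))) s := by
      have := (((hasDerivAt_id s).const_mul c).neg).exp
      simpa [mul_comm] using this
    have := h1.mul (Gfun_hasDerivAt s)
    refine this.congr_deriv ?_
    rw [hF', ← Real.exp_add]
    ring_nf
  have hint : IntegrableOn F' (Set.Ioi 0) := (int1 hc).sub ((int2 hc).const_mul c)
  have htend : Tendsto F atTop (nhds 0) := by
    apply squeeze_zero' (Filter.eventually_atTop.2 ⟨0, fun s hs =>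
        mul_nonneg (Real.exp_pos _).le (Gfun_nonneg hs)⟩)
      (Filter.eventually_atTop.2 ⟨0, fun s hs =>
        mul_le_mul_of_nonneg_left (Gfun_le_a hs) (Real.exp_pos _).le⟩)
    simpa using (tendsto_exp_mul hc).mul_const (Real.sqrt (Real.pi / 2))
  have h0 := MeasureTheory.integral_Ioi_of_hasDerivAt_of_tendsto' hderiv hint htend
  rw [show F 0 = 0 by simp [hF, Gfun_zero]] at h0
  have hsplit : ∫ s in Set.Ioi (0:ℝ), F' s
      = (∫ s in Set.Ioi (0:ℝ), Real.exp (-(c * s) - s ^ 2 / 2))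
        - c * ∫ s in Set.Ioi (0:ℝ), Real.exp (-(c * s)) * Gfun s := by
    rw [hF']
    rw [integral_sub (int1 hc) ((int2 hc).const_mul c), MeasureTheory.integral_const_mul]
  rw [hsplit] at h0
  linarith

lemma exp_Ioi {c b : ℝ} (hc : 0 < c) :
    ∫ s in Set.Ioi b, Real.exp (-(c * s)) = Real.exp (-(c * b)) / c := by
  have hderiv : ∀ s ∈ Set.Ici b, HasDerivAt (fun s : ℝ => -Real.exp (-(c * s)) / c)
      (Real.exp (-(c * s))) s := by
    intro s _
    have h1 : HasDerivAt (fun s : ℝ => Real.exp (-(c * s))) (-c * Real.exp (-(c * s))) s := by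
      have := (((hasDerivAt_id s).const_mul c).neg).exp
      simpa [mul_comm] using this
    have := (h1.neg).div_const c
    refine this.congr_deriv ?_
    field_simp
  have h0 := MeasureTheory.integral_Ioi_of_hasDerivAt_of_tendsto' hderiv
    (by simpa [neg_mul] using exp_neg_integrableOn_Ioi b hc)
    (by simpa using ((tendsto_exp_mul hc).neg).div_const c)
  rw [h0]
  ring

lemma key_bound {c : ℝ} (hc : 0 < c) :
    c * ∫ s in Set.Ioi (0:ℝ), Real.exp (-(c * s) - s ^ 2 / 2)
      ≤ 1 - Real.exp (-(c * Real.sqrt (Real.pi / 2))) := by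
  set a : ℝ := Real.sqrt (Real.pi / 2) with ha
  have ha0 : 0 < a := Real.sqrt_pos.2 (by positivity)
  rw [key_id hc]
  have hsplit : ∫ s in Set.Ioi (0:ℝ), Real.exp (-(c * s)) * Gfun s
      = (∫ s in Set.Ioc (0:ℝ) a, Real.exp (-(c * s)) * Gfun s)
        + ∫ s in Set.Ioi a, Real.exp (-(c * s)) * Gfun s := by
    rw [← MeasureTheory.setIntegral_union (Set.Ioc_disjoint_Ioi le_rfl) measurableSet_Ioi
      ((int2 hc).mono_set (fun x hx => hx.1)) ((int2 hc).mono_set (Set.Ioi_subset_Ioi ha0.le)),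
      Set.Ioc_union_Ioi_eq_Ioi ha0.le]
  -- first piece
  have hp1 : ∫ s in Set.Ioc (0:ℝ) a, Real.exp (-(c * s)) * Gfun s
      ≤ ∫ s in Set.Ioc (0:ℝ) a, s * Real.exp (-(c * s)) := by
    apply MeasureTheory.setIntegral_mono_on ((int2 hc).mono_set (fun x hx => hx.1))
      ((by fun_prop : Continuous fun s : ℝ => s * Real.exp (-(c * s))).integrableOn_Ioc)
      measurableSet_Ioc
    intro s hs
    rw [mul_comm s]
    exact mul_le_mul_of_nonneg_left (Gfun_le_self hs.1.le) (Real.exp_pos _).le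
  have hc1 : ∫ s in Set.Ioc (0:ℝ) a, s * Real.exp (-(c * s))
      = 1 / c ^ 2 - (c * a + 1) / c ^ 2 * Real.exp (-(c * a)) := by
    rw [← intervalIntegral.integral_of_le ha0.le]
    have hderiv : ∀ s ∈ Set.uIcc (0:ℝ) a,
        HasDerivAt (fun s : ℝ => -((c * s + 1) / c ^ 2) * Real.exp (-(c * s)))
        (s * Real.exp (-(c * s))) s := by
      intro s _
      have h1 : HasDerivAt (fun s : ℝ => Real.exp (-(c * s))) (-c * Real.exp (-(c * s))) s := by
        have := (((hasDerivAt_id s).const_mul c).neg).exp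
        simpa [mul_comm] using this
      have h2 : HasDerivAt (fun s : ℝ => -((c * s + 1) / c ^ 2)) (-(c / c ^ 2)) s := by
        have := ((((hasDerivAt_id s).const_mul c).add_const 1).div_const (c ^ 2)).neg
        exact this.congr_deriv (by simp)
      have := h2.mul h1
      refine this.congr_deriv ?_
      field_simp
      ring
    rw [intervalIntegral.integral_eq_sub_of_hasDerivAt hderiv
      ((by fun_prop : Continuous fun s : ℝ => s * Real.exp (-(c * s))).intervalIntegrable _ _)]
    simp
    field_simp
    ring
  -- second piece
  have hp2 : ∫ s in Set.Ioi a, Real.exp (-(c * s)) * Gfun s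
      ≤ ∫ s in Set.Ioi a, a * Real.exp (-(c * s)) := by
    apply MeasureTheory.setIntegral_mono_on ((int2 hc).mono_set (Set.Ioi_subset_Ioi ha0.le))
      (by simpa [neg_mul, IntegrableOn] using (exp_neg_integrableOn_Ioi a hc).const_mul a) measurableSet_Ioi
    intro s hs
    rw [mul_comm a]
    exact mul_le_mul_of_nonneg_left (Gfun_le_a (ha0.le.trans (mem_Ioi.1 hs).le))
      (Real.exp_pos _).le
  have hc2 : ∫ s in Set.Ioi a, a * Real.exp (-(c * s)) = a * (Real.exp (-(c * a)) / c) := by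
    rw [MeasureTheory.integral_const_mul, exp_Ioi hc]
  have : ∫ s in Set.Ioi (0:ℝ), Real.exp (-(c * s)) * Gfun s
      ≤ 1 / c ^ 2 - (c * a + 1) / c ^ 2 * Real.exp (-(c * a)) + a * (Real.exp (-(c * a)) / c) := by
    rw [hsplit]
    linarith [hp1, hp2, hc1, hc2]
  have hcc : c * (c * ∫ s in Set.Ioi (0:ℝ), Real.exp (-(c * s)) * Gfun s)
      ≤ c * (c * (1 / c ^ 2 - (c * a + 1) / c ^ 2 * Real.exp (-(c * a))
        + a * (Real.exp (-(c * a)) / c))) :=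
    mul_le_mul_of_nonneg_left (mul_le_mul_of_nonneg_left this hc.le) hc.le
  have heq : c * (c * (1 / c ^ 2 - (c * a + 1) / c ^ 2 * Real.exp (-(c * a))
      + a * (Real.exp (-(c * a)) / c))) = 1 - Real.exp (-(c * a)) := by
    field_simp [hc.ne']
    ring
  rw [heq] at hcc
  exact hcc

theorem tau_neg_sqrt_lower_bound (β : ℝ) (hβ : 0 < β) :
    tau (-Real.sqrt β) ≥ Real.exp (-Real.sqrt (Real.pi / 2) * Real.sqrt β) * stdPdf (Real.sqrt β) := by
  set c : ℝ := Real.sqrt β with hcdef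
  have hc : 0 < c := Real.sqrt_pos.2 hβ
  set a : ℝ := Real.sqrt (Real.pi / 2) with hadef
  set K : ℝ := ∫ s in Set.Ioi (0:ℝ), Real.exp (-(c * s) - s ^ 2 / 2) with hK
  -- stdCdf (-c) = stdPdf c * K
  have hcdf : stdCdf (-c) = stdPdf c * K := by
    rw [stdCdf]
    unfold stdPdf
    rw [MeasureTheory.integral_const_mul]
    have h1 : ∫ t in Set.Iic (-c), Real.exp (-t ^ 2 / 2)
        = ∫ t in Set.Ioi c, Real.exp (-t ^ 2 / 2) := by
      have := integral_comp_neg_Iic (-c) (fun t => Real.exp (-t ^ 2 / 2))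
      simpa [neg_neg] using this
    rw [h1]
    have A : MeasurableEmbedding fun x : ℝ => x + c :=
      (Homeomorph.addRight c).isClosedEmbedding.measurableEmbedding
    have h2 : ∫ t in Set.Ioi c, Real.exp (-t ^ 2 / 2)
        = ∫ s in Set.Ioi (0:ℝ), Real.exp (-(s + c) ^ 2 / 2) := by
      have := A.setIntegral_map (μ := volume) (fun t => Real.exp (-t ^ 2 / 2)) (Set.Ioi c)
      rw [map_add_right_eq_self volume c] at this
      rw [this]
      congr 1
      ext x
      simp [mem_Ioi]
    rw [h2]
    have h3 : ∀ s : ℝ, Real.exp (-(s + c) ^ 2 / 2)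
        = Real.exp (-c ^ 2 / 2) * Real.exp (-(c * s) - s ^ 2 / 2) := by
      intro s
      rw [← Real.exp_add]
      congr 1
      ring
    simp_rw [h3]
    rw [MeasureTheory.integral_const_mul]
    ring
  have hpdf : stdPdf (-c) = stdPdf c := by simp [stdPdf]
  have hτ : tau (-c) = stdPdf c * (1 - c * K) := by
    rw [tau, hcdf, hpdf]
    ring
  rw [hτ]
  have hbound : c * K ≤ 1 - Real.exp (-(c * a)) := key_bound hc
  have hpos : 0 < stdPdf c := by
    rw [stdPdf]
    positivity
  have : Real.exp (-a * c) ≤ 1 - c * K := by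
    rw [show -a * c = -(c * a) by ring]
    linarith
  calc stdPdf c * (1 - c * K) ≥ stdPdf c * Real.exp (-a * c) :=
        mul_le_mul_of_nonneg_left this hpos.le
    _ = Real.exp (-a * c) * stdPdf c := by ring
end
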